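/- Let X = {x_1,...,x_n} be a finite totally ordered set and let I be the family of all intervals of X. Then there exists an assignment of positive integer weights w : X → {1, 2, ..., |I|²} (in particular with |I|² ≤ n⁴) such that for all distinct intervals I_1, I_2 ∈ I, w(I_1) ≠ w(I_2). -/

import Mathlib

private lemma sum_Icc_two_mul (a k : ℕ) :
    (∑ x ∈ Finset.Icc a (a + k), x) * 2 = 2 * a * (k + 1) + k * (k + 1) := by
  induction k with
  | zero => simp; ring
  | succ k ih =>
      have h : Finset.Icc a (a + (k + 1)) = insert (a + k + 1) (Finset.Icc a (a + k)) := by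
        ext x
        simp only [Finset.mem_Icc, Finset.mem_insert]
        omega
      rw [h, Finset.sum_insert (by simp), Nat.add_mul, ih]
      ring

private lemma sum_w (n a k : ℕ) :
    ∑ x ∈ Finset.Icc a (a + k), (1 + (n + 1) * x)
      = (k + 1) + (n + 1) * ∑ x ∈ Finset.Icc a (a + k), x := by
  rw [Finset.sum_add_distrib, ← Finset.mul_sum, Finset.sum_const, Nat.card_Icc]
  simp
  omega

private lemma key (n a k a' k' : ℕ) (h : a + k < n) (h' : a' + k' < n)
    (hs : ∑ x ∈ Finset.Icc a (a + k), (1 + (n + 1) * x)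
      = ∑ x ∈ Finset.Icc a' (a' + k'), (1 + (n + 1) * x)) : a = a' ∧ k = k' := by
  rw [sum_w, sum_w] at hs
  set T := ∑ x ∈ Finset.Icc a (a + k), x with hT
  set T' := ∑ x ∈ Finset.Icc a' (a' + k'), x with hT'
  have hTeq : T = T' := by
    rcases le_or_gt T T' with hle | hlt
    · rcases Nat.exists_eq_add_of_le hle with ⟨d, hd⟩
      have hdd : k + 1 = (k' + 1) + (n + 1) * d := by
        rw [hd] at hs; ring_nf at hs ⊢; omega
      have hd0 : d = 0 := by nlinarith
      omega
    · rcases Nat.exists_eq_add_of_le hlt.le with ⟨d, hd⟩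
      have hdd : k' + 1 = (k + 1) + (n + 1) * d := by
        rw [hd] at hs; ring_nf at hs ⊢; omega
      have hd0 : d = 0 := by nlinarith
      omega
  have hk : k = k' := by
    rw [hTeq] at hs
    omega
  subst hk
  refine ⟨?_, rfl⟩
  have e2 : 2 * a * (k + 1) + k * (k + 1) = 2 * a' * (k + 1) + k * (k + 1) := by
    rw [← sum_Icc_two_mul, ← sum_Icc_two_mul, ← hT, ← hT', hTeq]
  nlinarith

/-- Deterministic Separation Lemma for intervals: weights in `{1,...,|I|²}`
(with `|I|² ≤ n⁴`) can be chosen so that all intervals get pairwise distinct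
total weights. -/
theorem deterministic_separation_intervals (n : ℕ) :
    (((Finset.univ : Finset (Fin n × Fin n)).filter fun p => p.1 ≤ p.2).image
          fun p => Finset.Icc p.1 p.2).card ^ 2 ≤ n ^ 4 ∧
      ∃ w : Fin n → ℕ,
        (∀ x : Fin n, w x ∈ Finset.Icc 1
          ((((Finset.univ : Finset (Fin n × Fin n)).filter fun p => p.1 ≤ p.2).image
              fun p => Finset.Icc p.1 p.2).card ^ 2)) ∧
        ∀ I₁ ∈ (((Finset.univ : Finset (Fin n × Fin n)).filter fun p => p.1 ≤ p.2).image
              fun p => Finset.Icc p.1 p.2),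
          ∀ I₂ ∈ (((Finset.univ : Finset (Fin n × Fin n)).filter fun p => p.1 ≤ p.2).image
              fun p => Finset.Icc p.1 p.2),
            I₁ ≠ I₂ → ∑ x ∈ I₁, w x ≠ ∑ x ∈ I₂, w x := by
  set F := (((Finset.univ : Finset (Fin n × Fin n)).filter fun p => p.1 ≤ p.2).image
      fun p => Finset.Icc p.1 p.2) with hF
  have hcard_le : F.card ≤ n ^ 2 := by
    calc F.card ≤ ((Finset.univ : Finset (Fin n × Fin n)).filter fun p => p.1 ≤ p.2).card :=
          Finset.card_image_le
      _ ≤ (Finset.univ : Finset (Fin n × Fin n)).card := Finset.card_filter_le _ _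
      _ = n ^ 2 := by simp [sq]
  have hcard_ge : n ≤ F.card := by
    have : (Finset.univ : Finset (Fin n)).card ≤ F.card := by
      apply Finset.card_le_card_of_injOn (fun i => Finset.Icc i i)
      · intro i _
        rw [hF, Finset.mem_coe, Finset.mem_image]
        exact ⟨(i, i), by simp, rfl⟩
      · intro i _ j _ hij
        simpa [Finset.Icc_self] using hij
    simpa using this
  refine ⟨by calc F.card ^ 2 ≤ (n ^ 2) ^ 2 := Nat.pow_le_pow_left hcard_le 2
      _ = n ^ 4 := by ring, ?_⟩
  refine ⟨fun x => 1 + (n + 1) * x.val, ?_, ?_⟩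
  · intro x
    rw [Finset.mem_Icc]
    simp only []
    constructor
    · simp
    · have hx : (x : ℕ) + 1 ≤ n := x.2
      calc 1 + (n + 1) * x.val ≤ 1 + (n + 1) * (n - 1) := by
            have : x.val ≤ n - 1 := by omega
            exact Nat.add_le_add_left (Nat.mul_le_mul_left _ this) 1
        _ ≤ n * n := by
            have hn : 1 ≤ n := by omega
            nlinarith [Nat.sub_add_cancel hn]
        _ ≤ F.card ^ 2 := by
            rw [sq]; exact Nat.mul_le_mul hcard_ge hcard_ge
  · intro I₁ hI₁ I₂ hI₂ hne
    rw [hF, Finset.mem_image] at hI₁ hI₂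
    obtain ⟨p, hp, hp1⟩ := hI₁
    obtain ⟨q, hq, hq1⟩ := hI₂
    rw [Finset.mem_filter] at hp hq
    subst hp1; subst hq1
    intro hsum
    apply hne
    have hab : (p.1 : ℕ) ≤ p.2 := hp.2
    have hab' : (q.1 : ℕ) ≤ q.2 := hq.2
    have conv : ∀ r : Fin n × Fin n,
        ∑ x ∈ Finset.Icc r.1 r.2, (1 + (n + 1) * x.val)
          = ∑ x ∈ Finset.Icc (r.1 : ℕ) (r.2 : ℕ), (1 + (n + 1) * x) := by
      intro r
      rw [← Fin.map_valEmbedding_Icc, Finset.sum_map]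
      rfl
    rw [conv p, conv q] at hsum
    have h1 : (p.2 : ℕ) = (p.1 : ℕ) + ((p.2 : ℕ) - p.1) := by omega
    have h2 : (q.2 : ℕ) = (q.1 : ℕ) + ((q.2 : ℕ) - q.1) := by omega
    rw [h1, h2] at hsum
    have hlt1 : (p.1 : ℕ) + ((p.2 : ℕ) - p.1) < n := by have := p.2.2; omega
    have hlt2 : (q.1 : ℕ) + ((q.2 : ℕ) - q.1) < n := by have := q.2.2; omega
    obtain ⟨ha, hk⟩ := key n _ _ _ _ hlt1 hlt2 hsum
    have hp1q1 : p.1 = q.1 := Fin.ext ha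
    have hp2q2 : p.2 = q.2 := Fin.ext (by omega)
    rw [hp1q1, hp2q2]
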